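/- There is a well-defined skew-derivation ∂_i^L on the positive half U⁺ of the quantum group (generated by the E_j): it is the unique linear map with ∂_i^L(1) = 0, ∂_i^L(E_j) = δ_{ij}, and ∂_i^L(fg) = v^{(α_i, ν)} ∂_i^L(f)·g + f·∂_i^L(g) for homogeneous f ∈ U⁺_μ, g ∈ U⁺_ν, where (·,·) is the symmetric bilinear form on the root lattice with (α_i, α_j) = c_{ij}. -/

import Mathlib

/-!
The positive half `U⁺` of the quantum group: the `ℚ(v)`-algebra generated by the `E_i`
subject to the quantum Serre relations, with its `ℕ^I`-grading by monomial content.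
-/

noncomputable section

/-- The indeterminate `v`. -/
def v : RatFunc ℚ := RatFunc.X

/-- Quantum integer `[r]`. -/
def qint (r : ℤ) : RatFunc ℚ := (v ^ r - v ^ (-r)) / (v - v⁻¹)

/-- Quantum factorial. -/
def qfact (n : ℕ) : RatFunc ℚ := ∏ i ∈ Finset.range n, qint ((i : ℤ) + 1)

/-- Gaussian binomial coefficient. -/
def qbinom (m : ℤ) (r : ℕ) : RatFunc ℚ :=
  (∏ i ∈ Finset.range r, qint (m - (i : ℤ))) / qfact r

open FreeAlgebra in
/-- The quantum Serre relations among the generators `E_i`. -/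
inductive SerreRel (I : Type) [DecidableEq I] (c : I → I → ℤ) :
    FreeAlgebra (RatFunc ℚ) I → FreeAlgebra (RatFunc ℚ) I → Prop
  | serre (i j : I) (h : i ≠ j) :
      SerreRel I c
        (∑ r ∈ Finset.range ((1 - c i j).toNat + 1),
          ((-1 : RatFunc ℚ) ^ r * qbinom (1 - c i j) r) •
            (ι _ i ^ r * ι _ j * ι _ i ^ ((1 - c i j).toNat - r))) 0

/-- The positive half `U⁺` of the quantum group. -/
def Uplus (I : Type) [DecidableEq I] (c : I → I → ℤ) : Type := RingQuot (SerreRel I c)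

instance (I : Type) [DecidableEq I] (c : I → I → ℤ) : Ring (Uplus I c) :=
  inferInstanceAs (Ring (RingQuot (SerreRel I c)))

instance (I : Type) [DecidableEq I] (c : I → I → ℤ) : Algebra (RatFunc ℚ) (Uplus I c) :=
  inferInstanceAs (Algebra (RatFunc ℚ) (RingQuot (SerreRel I c)))

variable {I : Type} [DecidableEq I]

/-- The generator `E_j` of `U⁺`. -/
def genE (c : I → I → ℤ) (j : I) : Uplus I c :=
  RingQuot.mkAlgHom (RatFunc ℚ) (SerreRel I c) (FreeAlgebra.ι _ j)

/-- `f` is homogeneous of degree `μ ∈ ℕ^I`: it lies in the span of the monomials in the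
`E_j` containing `E_j` exactly `μ j` times. -/
def Homog (c : I → I → ℤ) (μ : I → ℕ) (f : Uplus I c) : Prop :=
  f ∈ Submodule.span (RatFunc ℚ)
    {x : Uplus I c | ∃ l : List I, (∀ j, l.count j = μ j) ∧ x = (l.map (genE c)).prod}

-- AUX part, to be appended after Homog in proof.lean
namespace SkewAux

open FreeAlgebra

lemma v_ne : (v : RatFunc ℚ) ≠ 0 := RatFunc.X_ne_zero

lemma poly_ne {p q : Polynomial ℚ} (h : p ≠ q) :
    algebraMap (Polynomial ℚ) (RatFunc ℚ) p ≠ algebraMap _ _ q :=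
  fun hh => h (RatFunc.algebraMap_injective ℚ hh)

lemma vv_ne_one : v * v ≠ 1 := by
  have : algebraMap (Polynomial ℚ) (RatFunc ℚ) (Polynomial.X * Polynomial.X) ≠
      algebraMap _ _ 1 := by
    apply poly_ne
    intro h
    have := congrArg Polynomial.natDegree h
    simp [Polynomial.natDegree_mul Polynomial.X_ne_zero Polynomial.X_ne_zero] at this
  simpa [v, map_mul, RatFunc.algebraMap_X] using this

lemma vv_ne_negone : v * v ≠ -1 := by
  have : algebraMap (Polynomial ℚ) (RatFunc ℚ) (Polynomial.X * Polynomial.X) ≠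
      algebraMap _ _ (-1) := by
    apply poly_ne
    intro h
    have := congrArg Polynomial.natDegree h
    simp [Polynomial.natDegree_mul Polynomial.X_ne_zero Polynomial.X_ne_zero] at this
  simpa [v, map_mul, RatFunc.algebraMap_X] using this

lemma hv1 : v - v⁻¹ ≠ 0 := by
  intro h
  have h2 : v * v = 1 := by
    have hh := sub_eq_zero.mp h
    nth_rewrite 2 [hh]; exact mul_inv_cancel₀ v_ne
  exact vv_ne_one h2

lemma hv2 : v + v⁻¹ ≠ 0 := by
  intro h
  have h2 : v * v = -1 := by
    have hh := eq_neg_of_add_eq_zero_left h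
    nth_rewrite 2 [hh]; rw [mul_neg, mul_inv_cancel₀ v_ne]
  exact vv_ne_negone h2

lemma qint_one : qint 1 = 1 := by
  simp [qint, zpow_one, div_self hv1]

lemma qint_two : qint 2 = v + v⁻¹ := by
  rw [qint, div_eq_iff hv1]
  rw [show ((2:ℤ) = (2:ℕ)) from rfl, zpow_neg, zpow_natCast]
  have := v_ne
  field_simp
  ring

lemma qfact_one : qfact 1 = 1 := by simp [qfact, qint_one]

lemma qfact_two : qfact 2 = v + v⁻¹ := by
  rw [qfact, Finset.prod_range_succ, Finset.prod_range_one]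
  norm_num [qint_one, qint_two]

lemma qbinom_zero (m : ℤ) : qbinom m 0 = 1 := by simp [qbinom, qfact]
lemma qbinom_one_one : qbinom 1 1 = 1 := by simp [qbinom, qfact_one, qint_one]
lemma qbinom_two_one : qbinom 2 1 = v + v⁻¹ := by simp [qbinom, qfact_one, qint_two]
lemma qbinom_two_two : qbinom 2 2 = 1 := by
  rw [qbinom, qfact_two, Finset.prod_range_succ, Finset.prod_range_one]
  norm_num [qint_one, qint_two, div_self hv2]

variable {I : Type} [DecidableEq I] (c : I → I → ℤ) (i : I)

/-- The quotient map. -/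
def mk : FreeAlgebra (RatFunc ℚ) I →ₐ[RatFunc ℚ] Uplus I c :=
  RingQuot.mkAlgHom (RatFunc ℚ) (SerreRel I c)

lemma mk_ι (j : I) : mk c (ι _ j) = genE c j := rfl

/-- Matrix realizing the generator together with its derivative and twist. -/
def M (j : I) : Matrix (Fin 2) (Fin 2) (Uplus I c) :=
  !![genE c j, if i = j then 1 else 0; 0, (v ^ (c i j)) • genE c j]

def psiF : FreeAlgebra (RatFunc ℚ) I →ₐ[RatFunc ℚ] Matrix (Fin 2) (Fin 2) (Uplus I c) :=
  FreeAlgebra.lift _ (M c i)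

/-- The twist map on the free algebra. -/
def Tf : FreeAlgebra (RatFunc ℚ) I →ₐ[RatFunc ℚ] Uplus I c :=
  FreeAlgebra.lift _ (fun j => (v ^ (c i j)) • genE c j)

/-- The derivative on the free algebra. -/
def Df (a : FreeAlgebra (RatFunc ℚ) I) : Uplus I c := psiF c i a 0 1

lemma Tf_ι (j : I) : Tf c i (ι _ j) = (v ^ (c i j)) • genE c j := by
  simp [Tf]

lemma psiF_entries (a : FreeAlgebra (RatFunc ℚ) I) :
    psiF c i a 0 0 = mk c a ∧ psiF c i a 1 0 = 0 ∧ psiF c i a 1 1 = Tf c i a := by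
  induction a using FreeAlgebra.induction with
  | grade0 r =>
    simp [AlgHom.commutes, Matrix.algebraMap_matrix_apply]
  | grade1 j =>
    simp [psiF, M, Tf, mk_ι]
  | mul a b ha hb =>
    simp only [map_mul, Matrix.mul_apply, Fin.sum_univ_two, ha.1, ha.2.1, ha.2.2,
      hb.1, hb.2.1, hb.2.2]
    refine ⟨?_, ?_, ?_⟩ <;> simp
  | add a b ha hb =>
    simp [map_add, Matrix.add_apply, ha.1, ha.2.1, ha.2.2, hb.1, hb.2.1, hb.2.2]

lemma Df_mul (x y : FreeAlgebra (RatFunc ℚ) I) :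
    Df c i (x * y) = Df c i x * Tf c i y + mk c x * Df c i y := by
  have hx := psiF_entries c i x
  have hy := psiF_entries c i y
  simp only [Df, map_mul, Matrix.mul_apply, Fin.sum_univ_two, hx.1, hy.2.2]
  exact add_comm _ _

lemma Df_ι (j : I) : Df c i (ι _ j) = if i = j then 1 else 0 := by
  simp [Df, psiF, M]

lemma Df_add (x y : FreeAlgebra (RatFunc ℚ) I) : Df c i (x + y) = Df c i x + Df c i y := by
  simp [Df, map_add]

lemma Df_smul (r : RatFunc ℚ) (x : FreeAlgebra (RatFunc ℚ) I) :
    Df c i (r • x) = r • Df c i x := by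
  simp [Df, map_smul]

end SkewAux
namespace SkewAux
open FreeAlgebra
variable {I : Type} [DecidableEq I] (c : I → I → ℤ) (i : I)

lemma Tf_mono (a b : I) (r s : ℕ) :
    Tf c i (ι _ a ^ r * ι _ b * ι _ a ^ s) =
      ((v ^ (c i a)) ^ r * v ^ (c i b) * (v ^ (c i a)) ^ s) •
        mk c (ι _ a ^ r * ι _ b * ι _ a ^ s) := by
  simp only [map_mul, map_pow, Tf_ι, smul_pow, smul_mul_assoc, mul_smul_comm, mk_ι,
    map_mul, map_pow, mk_ι, smul_smul]
  congr 1
  ring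

lemma mk_serre (a b : I) (hab : a ≠ b) :
    mk c (∑ r ∈ Finset.range ((1 - c a b).toNat + 1),
        ((-1 : RatFunc ℚ) ^ r * qbinom (1 - c a b) r) •
          (ι _ a ^ r * ι _ b * ι _ a ^ ((1 - c a b).toNat - r))) = 0 := by
  have := RingQuot.mkAlgHom_rel (RatFunc ℚ) (SerreRel.serre (c := c) a b hab)
  exact this.trans (map_zero _)

lemma Tf_serre (a b : I) (hab : a ≠ b) :
    Tf c i (∑ r ∈ Finset.range ((1 - c a b).toNat + 1),
        ((-1 : RatFunc ℚ) ^ r * qbinom (1 - c a b) r) •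
          (ι _ a ^ r * ι _ b * ι _ a ^ ((1 - c a b).toNat - r))) = 0 := by
  set n := (1 - c a b).toNat with hn
  rw [map_sum]
  have key : ∀ r ∈ Finset.range (n + 1),
      Tf c i (((-1 : RatFunc ℚ) ^ r * qbinom (1 - c a b) r) •
          (ι _ a ^ r * ι _ b * ι _ a ^ (n - r))) =
        ((v ^ (c i a)) ^ n * v ^ (c i b)) •
          (((-1 : RatFunc ℚ) ^ r * qbinom (1 - c a b) r) •
            mk c (ι _ a ^ r * ι _ b * ι _ a ^ (n - r))) := by
    intro r hr
    rw [map_smul, Tf_mono, smul_smul, smul_smul]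
    congr 1
    have hrn : r ≤ n := Nat.lt_succ_iff.mp (Finset.mem_range.mp hr)
    have : (v ^ (c i a)) ^ r * v ^ (c i b) * (v ^ (c i a)) ^ (n - r) =
        (v ^ (c i a)) ^ n * v ^ (c i b) := by
      rw [mul_right_comm, ← pow_add, Nat.add_sub_cancel' hrn]
    rw [this]; ring
  rw [Finset.sum_congr rfl key, ← Finset.smul_sum]
  have : (∑ r ∈ Finset.range (n + 1),
      ((-1 : RatFunc ℚ) ^ r * qbinom (1 - c a b) r) •
        mk c (ι _ a ^ r * ι _ b * ι _ a ^ (n - r))) = 0 := by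
    have h := mk_serre c a b hab
    rw [map_sum] at h
    simpa [map_smul] using h
  rw [this, smul_zero]

end SkewAux
namespace SkewAux
open FreeAlgebra
variable {I : Type} [DecidableEq I] (c : I → I → ℤ) (i : I)

lemma Df_neg (x : FreeAlgebra (RatFunc ℚ) I) : Df c i (-x) = -Df c i x := by
  simp [Df, map_neg]

lemma vz2 : v ^ (2:ℤ) = v * v := by
  rw [show ((2:ℤ) = (2:ℕ)) from rfl, zpow_natCast, pow_two]

lemma vzn1 : v ^ (-1:ℤ) = v⁻¹ := by rw [zpow_neg, zpow_one]

lemma Df_serre (hdiag : ∀ i, c i i = 2) (hsym : ∀ i j, c i j = c j i)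
    (hoff : ∀ i j, i ≠ j → c i j = 0 ∨ c i j = -1) (a b : I) (hab : a ≠ b) :
    Df c i (∑ r ∈ Finset.range ((1 - c a b).toNat + 1),
        ((-1 : RatFunc ℚ) ^ r * qbinom (1 - c a b) r) •
          (ι _ a ^ r * ι _ b * ι _ a ^ ((1 - c a b).toNat - r))) = 0 := by
  rcases hoff a b hab with h0 | h1
  · rw [h0]
    norm_num [Finset.sum_range_succ, Finset.sum_range_one, qbinom_zero, qbinom_one_one]
    simp only [Df_add, Df_neg, Df_mul, Df_ι, Tf_ι, mk_ι]
    by_cases hia : i = a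
    · subst hia
      simp [hab, h0]
    · by_cases hib : i = b
      · subst hib
        simp [Ne.symm hab, hsym i a, h0]
      · simp [hia, hib]
  · have e : ((1:ℤ) - c a b).toNat = 2 := by rw [h1]; rfl
    rw [e, h1]
    norm_num [Finset.sum_range_succ, Finset.sum_range_one, qbinom_zero, qbinom_two_one,
      qbinom_two_two, pow_two]
    simp only [Df_add, Df_neg, Df_smul, Df_mul, Df_ι, Tf_ι, mk_ι, map_mul]
    by_cases hia : i = a
    · subst hia
      simp only [if_neg hab, if_true, eq_self_iff_true, smul_zero, hdiag, h1, vz2, vzn1, smul_smul, smul_mul_assoc,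
        mul_smul_comm, mul_one, one_mul, mul_zero, zero_mul, add_zero, zero_add, mul_add,
        add_mul, smul_add, mul_assoc]
      have hv := v_ne
      trans ((v*v + 1 + (-v⁻¹*(v*(v*v⁻¹)) + -v*(v*(v*v⁻¹)))) • (genE c b * genE c i) +
        ((-v⁻¹ + -v) + (v⁻¹*(v*v) + v⁻¹)) • (genE c i * genE c b))
      · simp only [add_smul, one_smul]
        try abel
      · rw [show (v*v + 1 + (-v⁻¹*(v*(v*v⁻¹)) + -v*(v*(v*v⁻¹))) : RatFunc ℚ) = 0 by
            field_simp <;> ring,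
          show ((-v⁻¹ + -v) + (v⁻¹*(v*v) + v⁻¹) : RatFunc ℚ) = 0 by field_simp <;> ring,
          zero_smul, zero_smul, add_zero]
    · by_cases hib : i = b
      · subst hib
        simp only [if_neg hia, if_true, eq_self_iff_true, smul_zero, hdiag, hsym i a, h1, vz2, vzn1, smul_smul,
          smul_mul_assoc, mul_smul_comm, mul_one, one_mul, mul_zero, zero_mul, add_zero,
          zero_add, mul_add, add_mul, smul_add, mul_assoc]
        have hv := v_ne
        trans ((v⁻¹*v⁻¹ + (-v⁻¹*v⁻¹ + -v*v⁻¹) + 1) • (genE c a * genE c a))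
        · simp only [add_smul, one_smul]
          try abel
        · rw [show (v⁻¹*v⁻¹ + (-v⁻¹*v⁻¹ + -v*v⁻¹) + 1 : RatFunc ℚ) = 0 by
              field_simp <;> ring, zero_smul]
      · simp [hia, hib]

end SkewAux
namespace SkewAux
open FreeAlgebra
variable {I : Type} [DecidableEq I] (c : I → I → ℤ) (i : I)

lemma psiF_serre (hdiag : ∀ i, c i i = 2) (hsym : ∀ i j, c i j = c j i)
    (hoff : ∀ i j, i ≠ j → c i j = 0 ∨ c i j = -1) :
    ∀ ⦃x y : FreeAlgebra (RatFunc ℚ) I⦄, SerreRel I c x y → psiF c i x = psiF c i y := by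
  intro x y h
  cases h with
  | serre a b hab =>
    ext p q
    fin_cases p <;> fin_cases q <;> simp only [map_zero, Matrix.zero_apply]
    · exact ((psiF_entries c i _).1).trans (mk_serre c a b hab)
    · exact Df_serre c i hdiag hsym hoff a b hab
    · exact (psiF_entries c i _).2.1
    · exact ((psiF_entries c i _).2.2).trans (Tf_serre c i a b hab)

variable (hd : ∀ i, c i i = 2) (hs : ∀ i j, c i j = c j i)
  (ho : ∀ i j, i ≠ j → c i j = 0 ∨ c i j = -1)

def Psi : Uplus I c →ₐ[RatFunc ℚ] Matrix (Fin 2) (Fin 2) (Uplus I c) :=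
  RingQuot.liftAlgHom (RatFunc ℚ) ⟨psiF c i, psiF_serre c i hd hs ho⟩

lemma Psi_mk (a : FreeAlgebra (RatFunc ℚ) I) :
    Psi c i hd hs ho (mk c a) = psiF c i a :=
  RingQuot.liftAlgHom_mkAlgHom_apply _ _ _ _

lemma Psi00 (x : Uplus I c) : Psi c i hd hs ho x 0 0 = x := by
  obtain ⟨a, rfl⟩ := RingQuot.mkAlgHom_surjective (RatFunc ℚ) (SerreRel I c) x
  rw [show RingQuot.mkAlgHom (RatFunc ℚ) (SerreRel I c) a = mk c a from rfl, Psi_mk,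
    (psiF_entries c i a).1]

lemma Psi10 (x : Uplus I c) : Psi c i hd hs ho x 1 0 = 0 := by
  obtain ⟨a, rfl⟩ := RingQuot.mkAlgHom_surjective (RatFunc ℚ) (SerreRel I c) x
  rw [show RingQuot.mkAlgHom (RatFunc ℚ) (SerreRel I c) a = mk c a from rfl, Psi_mk,
    (psiF_entries c i a).2.1]

/-- The skew derivation. -/
def Dm : Uplus I c →ₗ[RatFunc ℚ] Uplus I c where
  toFun x := Psi c i hd hs ho x 0 1
  map_add' x y := by
    show Psi c i hd hs ho (x + y) 0 1 = Psi c i hd hs ho x 0 1 + Psi c i hd hs ho y 0 1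
    rw [map_add, Matrix.add_apply]
  map_smul' r x := by
    show Psi c i hd hs ho (r • x) 0 1 = _
    rw [map_smul, Matrix.smul_apply]
    rfl

lemma Dm_apply (x : Uplus I c) : Dm c i hd hs ho x = Psi c i hd hs ho x 0 1 := rfl

lemma Dm_one : Dm c i hd hs ho 1 = 0 := by
  rw [Dm_apply, map_one]
  simp [Matrix.one_apply]

lemma Dm_gen (j : I) : Dm c i hd hs ho (genE c j) = if i = j then 1 else 0 := by
  rw [Dm_apply, ← mk_ι, Psi_mk]
  simp [psiF, M]

lemma Psi11_gen (j : I) :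
    Psi c i hd hs ho (genE c j) 1 1 = (v ^ (c i j)) • genE c j := by
  rw [← mk_ι, Psi_mk]
  simp [psiF, M, mk_ι]

lemma Psi11_mul (x y : Uplus I c) :
    Psi c i hd hs ho (x * y) 1 1 = Psi c i hd hs ho x 1 1 * Psi c i hd hs ho y 1 1 := by
  rw [map_mul, Matrix.mul_apply, Fin.sum_univ_two, Psi10, zero_mul, zero_add]

lemma Dm_mul (x y : Uplus I c) :
    Dm c i hd hs ho (x * y) =
      x * Dm c i hd hs ho y + Dm c i hd hs ho x * Psi c i hd hs ho y 1 1 := by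
  rw [Dm_apply, map_mul, Matrix.mul_apply, Fin.sum_univ_two, Psi00]
  rfl

lemma Psi11_prod (l : List I) :
    Psi c i hd hs ho ((l.map (genE c)).prod) 1 1 =
      ((l.map (fun j => (v : RatFunc ℚ) ^ (c i j))).prod) • (l.map (genE c)).prod := by
  induction l with
  | nil => simp [map_one, Matrix.one_apply]
  | cons a l ih =>
    rw [List.map_cons, List.prod_cons, Psi11_mul, Psi11_gen, ih]
    rw [smul_mul_assoc, mul_smul_comm, smul_smul, List.map_cons, List.prod_cons]

lemma scalar_list [Fintype I] (l : List I) :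
    (l.map (fun j => (v : RatFunc ℚ) ^ (c i j))).prod =
      v ^ (∑ j, c i j * (l.count j : ℤ)) := by
  induction l with
  | nil => simp
  | cons a l ih =>
    rw [List.map_cons, List.prod_cons, ih, ← zpow_add₀ v_ne]
    congr 1
    have h : ∀ j : I, ((a :: l).count j : ℤ) = (l.count j : ℤ) + if a = j then 1 else 0 := by
      intro j
      rw [List.count_cons]
      push_cast
      split <;> simp_all
    have hsum : (∑ j, c i j * (((a :: l).count j : ℕ) : ℤ)) =
        ∑ j, (c i j * (l.count j : ℤ) + if a = j then c i j else 0) := by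
      refine Finset.sum_congr rfl fun j _ => ?_
      rw [h j]
      by_cases haj : a = j <;> simp [haj] <;> ring
    rw [hsum, Finset.sum_add_distrib, Finset.sum_ite_eq Finset.univ a,
      if_pos (Finset.mem_univ a)]
    ring

lemma homog_mono (l : List I) : Homog c (fun j => l.count j) ((l.map (genE c)).prod) :=
  Submodule.subset_span ⟨l, fun _ => rfl, rfl⟩

lemma Psi11_homog [Fintype I] (ν : I → ℕ) (g : Uplus I c) (hg : Homog c ν g) :
    Psi c i hd hs ho g 1 1 = (v ^ (∑ j, c i j * (ν j : ℤ))) • g := by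
  induction hg using Submodule.span_induction with
  | mem x hx =>
    obtain ⟨l, hl, rfl⟩ := hx
    rw [Psi11_prod, scalar_list]
    simp only [hl]
  | zero => simp
  | add x y hx hy ihx ihy => rw [map_add, Matrix.add_apply, ihx, ihy, smul_add]
  | smul a x hx ih => rw [map_smul, Matrix.smul_apply, ih, smul_comm]

lemma Dm_leibniz [Fintype I] (μ ν : I → ℕ) (f g : Uplus I c)
    (hf : Homog c μ f) (hg : Homog c ν g) :
    Dm c i hd hs ho (f * g) =
      (v ^ (∑ j, c i j * (ν j : ℤ))) • (Dm c i hd hs ho f * g) + f * Dm c i hd hs ho g := by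
  rw [Dm_mul, Psi11_homog c i hd hs ho ν g hg, mul_smul_comm, add_comm]

/-- Monomials. -/
def Mon : Set (Uplus I c) := {x | ∃ l : List I, x = (l.map (genE c)).prod}

lemma mem_span_Mon (x : Uplus I c) : x ∈ Submodule.span (RatFunc ℚ) (Mon c) := by
  obtain ⟨a, rfl⟩ := RingQuot.mkAlgHom_surjective (RatFunc ℚ) (SerreRel I c) x
  show mk c a ∈ _
  induction a using FreeAlgebra.induction with
  | grade0 r =>
    rw [AlgHom.commutes, Algebra.algebraMap_eq_smul_one]
    exact Submodule.smul_mem _ _ (Submodule.subset_span ⟨[], by simp⟩)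
  | grade1 j =>
    exact Submodule.subset_span ⟨[j], by simp [mk_ι]⟩
  | mul a b ha hb =>
    rw [map_mul]
    have h2 := Submodule.mul_mem_mul ha hb
    rw [Submodule.span_mul_span] at h2
    refine Submodule.span_le.mpr ?_ h2
    rintro z ⟨x, ⟨lx, rfl⟩, y, ⟨ly, rfl⟩, rfl⟩
    exact Submodule.subset_span ⟨lx ++ ly, by simp⟩
  | add a b ha hb =>
    rw [map_add]
    exact Submodule.add_mem _ ha hb

end SkewAux
/-- there is a unique linear map `∂_i^L : U⁺ → U⁺` with `∂_i^L(1) = 0`,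
`∂_i^L(E_j) = δ_{ij}`, and the skew-Leibniz rule
`∂_i^L(fg) = v^{(α_i,ν)} ∂_i^L(f)·g + f·∂_i^L(g)` for homogeneous `f, g` of degrees
`μ, ν`, where `(α_i, ν) = Σ_j c_{ij} ν_j`. -/
theorem exists_unique_skew_derivation (I : Type) [DecidableEq I] [Fintype I]
    (c : I → I → ℤ) (hdiag : ∀ i, c i i = 2) (hsym : ∀ i j, c i j = c j i)
    (hoff : ∀ i j, i ≠ j → c i j = 0 ∨ c i j = -1) (i : I) :
    ∃! D : Uplus I c →ₗ[RatFunc ℚ] Uplus I c,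
      D 1 = 0 ∧
      (∀ j, D (genE c j) = if i = j then 1 else 0) ∧
      (∀ (μ ν : I → ℕ) (f g : Uplus I c), Homog c μ f → Homog c ν g →
        D (f * g) = (v ^ (∑ j, c i j * (ν j : ℤ))) • (D f * g) + f * D g) := by
  refine ⟨SkewAux.Dm c i hdiag hsym hoff, ⟨SkewAux.Dm_one c i hdiag hsym hoff,
    SkewAux.Dm_gen c i hdiag hsym hoff, fun μ ν f g hf hg =>
      SkewAux.Dm_leibniz c i hdiag hsym hoff μ ν f g hf hg⟩, ?_⟩
  rintro D' ⟨h1, h2, h3⟩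
  apply LinearMap.ext
  intro x0
  have hx := SkewAux.mem_span_Mon c x0
  induction hx using Submodule.span_induction with
  | mem y hy =>
    obtain ⟨l, rfl⟩ := hy
    induction l with
    | nil =>
      simp only [List.map_nil, List.prod_nil]
      rw [h1, SkewAux.Dm_one]
    | cons a l ih =>
      have hfa : Homog c (fun j => List.count j [a]) (genE c a) := by
        simpa using SkewAux.homog_mono c [a]
      have hgl := SkewAux.homog_mono c l
      rw [List.map_cons, List.prod_cons, h3 _ _ _ _ hfa hgl,
        SkewAux.Dm_leibniz c i hdiag hsym hoff _ _ _ _ hfa hgl,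
        h2, SkewAux.Dm_gen, ih]
  | zero => rw [map_zero, map_zero]
  | add x y hx hy ihx ihy => rw [map_add, map_add, ihx, ihy]
  | smul a x hx ih => rw [map_smul, map_smul, ih]
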